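/- Let G : ℝ → [0,1] be differentiable on an open interval I with G'(d) = −g(d), satisfy 0 < G(d) < 1 on I, be Lebesgue-integrable on [d, ∞) for d ∈ I, and let λ ∈ (0,1]. Define m_λ(d) := (1 − d·G(d))/(λ·(1 − G(d))) and the borrower-optimal zero-profit objective φ(d) := ∫_d^∞ G(x) dx − m_λ(d)·(1 − G(d)). Then for every d ∈ I, φ is differentiable at d with φ'(d) = ((1 − λ)·G(d) − d·g(d)) / λ. In particular, d* ∈ I is a critical point of φ if and only if d*·g(d*) = (1 − λ)·G(d*), and at such a point the pledged collateral is m_λ(d*) = (1 − d*·G(d*))/(λ·(1 − G(d*))). -/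

import Mathlib

open MeasureTheory Set

/-- The zero-profit collateral schedule `m_λ(d) := (1 − d·G(d))/(λ·(1 − G(d)))`. -/
noncomputable def zeroProfitCollateral (G : ℝ → ℝ) (lam : ℝ) (d : ℝ) : ℝ :=
  (1 - d * G d) / (lam * (1 - G d))

/-- The borrower-optimal zero-profit objective
`φ(d) := ∫_d^∞ G(x) dx − m_λ(d)·(1 − G(d))`. -/
noncomputable def bankObjective (G : ℝ → ℝ) (lam : ℝ) (d : ℝ) : ℝ :=
  (∫ x in Set.Ici d, G x) - zeroProfitCollateral G lam d * (1 - G d)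

/-- On an open interval `I` where `G` (valued in `[0,1]`) is differentiable with
`G' = −g`, `0 < G < 1`, and `G` is integrable on upper tails, for `λ ∈ (0,1]` the objective
`φ` is differentiable with `φ'(d) = ((1 − λ)·G(d) − d·g(d))/λ`; hence `d* ∈ I` is a critical
point of `φ` iff `d*·g(d*) = (1 − λ)·G(d*)`, with collateral
`m_λ(d*) = (1 − d*·G(d*))/(λ·(1 − G(d*)))`. -/
theorem bankObjective_deriv_and_tangency
    (G g : ℝ → ℝ) (I : Set ℝ) (hI : IsOpen I) (hI' : I.OrdConnected)
    (hG01 : ∀ x, G x ∈ Set.Icc (0 : ℝ) 1)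
    (hderiv : ∀ d ∈ I, HasDerivAt G (-(g d)) d)
    (hGpos : ∀ d ∈ I, 0 < G d) (hGlt : ∀ d ∈ I, G d < 1)
    (hint : ∀ d ∈ I, IntegrableOn G (Set.Ici d) volume)
    (lam : ℝ) (hlam : lam ∈ Set.Ioc (0 : ℝ) 1) :
    ∀ d ∈ I,
      HasDerivAt (bankObjective G lam) (((1 - lam) * G d - d * g d) / lam) d ∧
      (deriv (bankObjective G lam) d = 0 ↔ d * g d = (1 - lam) * G d) ∧
      zeroProfitCollateral G lam d = (1 - d * G d) / (lam * (1 - G d)) := by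
  intro d hd
  have hlam0 : lam ≠ 0 := ne_of_gt hlam.1
  have hcont : ContinuousOn G I := fun x hx => (hderiv x hx).continuousAt.continuousWithinAt
  -- pick a ∈ I with a < d
  obtain ⟨ε, hε, hball⟩ := Metric.isOpen_iff.mp hI d hd
  set a := d - ε / 2 with ha_def
  have haI : a ∈ I := by
    apply hball
    rw [Metric.mem_ball, Real.dist_eq, ha_def]
    rw [abs_of_nonpos (by linarith)]
    linarith
  have had : a < d := by simp [ha_def]; linarith
  set s := I ∩ Ioi a with hs_def
  have hso : IsOpen s := hI.inter isOpen_Ioi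
  have hds : d ∈ s := ⟨hd, had⟩
  set ψ : ℝ → ℝ := fun x => (∫ t in Ici a, G t) - (∫ t in a..x, G t) - (1 - x * G x) / lam
    with hψ
  have heq : ∀ x ∈ s, bankObjective G lam x = ψ x := by
    intro x hx
    have hax : a ≤ x := le_of_lt hx.2
    have hG1 : (1 : ℝ) - G x ≠ 0 := by have := hGlt x hx.1; linarith
    have hsplit : (∫ t in Ici a, G t) = (∫ t in Ico a x, G t) + ∫ t in Ici x, G t := by
      rw [← setIntegral_union]
      · rw [Ico_union_Ici_eq_Ici hax]
      · exact Set.disjoint_left.mpr fun y hy hy' => absurd hy' (not_le.mpr hy.2)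
      · exact measurableSet_Ici
      · exact (hint a haI).mono_set (Ico_subset_Ici_self)
      · exact hint x hx.1
    have hico : (∫ t in Ico a x, G t) = ∫ t in a..x, G t := by
      rw [intervalIntegral.integral_of_le hax, integral_Ico_eq_integral_Ioo,
        integral_Ioc_eq_integral_Ioo]
    have hm : zeroProfitCollateral G lam x * (1 - G x) = (1 - x * G x) / lam := by
      unfold zeroProfitCollateral
      field_simp
    simp only [bankObjective, ψ, hm]
    rw [hsplit, hico]
    ring
  have hmem : s ∈ nhds d := hso.mem_nhds hds
  have hEq : bankObjective G lam =ᶠ[nhds d] ψ := Filter.eventually_of_mem hmem heq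
  -- derivative of ψ
  have hint1 : IntervalIntegrable G volume a d :=
    (intervalIntegrable_iff_integrableOn_Ioc_of_le had.le).mpr
      ((hint a haI).mono_set (fun y hy => le_of_lt hy.1))
  have hmeas : StronglyMeasurableAtFilter G (nhds d) volume :=
    ContinuousOn.stronglyMeasurableAtFilter hI hcont d hd
  have h1 : HasDerivAt (fun x => ∫ t in a..x, G t) (G d) d :=
    intervalIntegral.integral_hasDerivAt_right hint1 hmeas
      (hderiv d hd).continuousAt
  have h2 : HasDerivAt (fun x => x * G x) (G d + d * (-(g d))) d := by
    have := (hasDerivAt_id d).fun_mul (hderiv d hd)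
    simpa using this
  have h3 : HasDerivAt (fun x => (1 - x * G x) / lam)
      ((0 - (G d + d * (-(g d)))) / lam) d :=
    ((hasDerivAt_const d (1:ℝ)).sub h2).div_const lam
  have hψd : HasDerivAt ψ (((1 - lam) * G d - d * g d) / lam) d := by
    have := (((hasDerivAt_const d (∫ t in Ici a, G t)).fun_sub h1).fun_sub h3)
    refine this.congr_deriv ?_
    field_simp
    ring
  have hφd : HasDerivAt (bankObjective G lam) (((1 - lam) * G d - d * g d) / lam) d :=
    hψd.congr_of_eventuallyEq hEq
  refine ⟨hφd, ?_, rfl⟩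
  rw [hφd.deriv]
  rw [div_eq_zero_iff]
  constructor
  · rintro (h | h)
    · linarith
    · exact absurd h hlam0
  · intro h; left; linarith
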